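/- Let q_0, q_1 be probability measures and L(·, t) measurable losses with |L(z,t)| ≤ M. Define ε_{F,t} := E_{q_t} L(·, t) and ε_{CF,t} := E_{q_{1−t}} L(·, t). For weights p_0, p_1 ≥ 0 with p_0 + p_1 = 1, one has p_0 ε_{CF,1} + p_1 ε_{CF,0} ≤ p_0 ε_{F,1} + p_1 ε_{F,0} + M (√(KL(q_0‖q_1)/2) + √(KL(q_1‖q_0)/2)). -/

import Mathlib

open MeasureTheory Real


lemma crb_G_mono : MonotoneOn (fun x : ℝ => (x + 1) * log x - 2 * (x - 1)) (Set.Ioi 0) := by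
  have hderiv : ∀ x ∈ Set.Ioi (0:ℝ),
      HasDerivAt (fun x : ℝ => (x + 1) * log x - 2 * (x - 1)) (log x + (x + 1) / x - 2) x := by
    intro x hx
    have hx0 : x ≠ 0 := ne_of_gt hx
    have h1 : HasDerivAt (fun x : ℝ => (x + 1) * log x) (1 * log x + (x + 1) * x⁻¹) x :=
      ((hasDerivAt_id x).add_const 1).mul (Real.hasDerivAt_log hx0)
    have h2 : HasDerivAt (fun x : ℝ => 2 * (x - 1)) 2 x := by
      simpa using ((hasDerivAt_id x).sub_const 1).const_mul 2
    exact (h1.sub h2).congr_deriv (by ring)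
  apply monotoneOn_of_deriv_nonneg (convex_Ioi 0)
  · exact ContinuousOn.sub (ContinuousOn.mul (by fun_prop)
      (Real.continuousOn_log.mono (by intro x hx; exact ne_of_gt hx))) (by fun_prop)
  · intro x hx
    rw [interior_Ioi] at hx
    exact (hderiv x hx).differentiableAt.differentiableWithinAt
  · intro x hx
    rw [interior_Ioi] at hx
    rw [(hderiv x hx).deriv]
    have hx0 : 0 < x := hx
    have hlog : Real.log x⁻¹ ≤ x⁻¹ - 1 := Real.log_le_sub_one_of_pos (by positivity)
    rw [Real.log_inv] at hlog
    have : (x + 1) / x = 1 + x⁻¹ := by field_simp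
    nlinarith [hlog]

lemma crb_F_hasDeriv {x : ℝ} (hx : 0 < x) :
    HasDerivAt (fun x : ℝ => (2 * x + 4) * (x * log x - x + 1) - 3 * (x - 1) ^ 2)
      (4 * ((x + 1) * log x - 2 * (x - 1))) x := by
  have hx0 : x ≠ 0 := ne_of_gt hx
  have h1 : HasDerivAt (fun x : ℝ => x * log x - x + 1) (log x + 1 - 1) x :=
    ((Real.hasDerivAt_mul_log hx0).sub (hasDerivAt_id x)).add_const 1
  have h2 : HasDerivAt (fun x : ℝ => 2 * x + 4) 2 x := by
    simpa using ((hasDerivAt_id x).const_mul 2).add_const 4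
  have h3 : HasDerivAt (fun x : ℝ => 3 * (x - 1) ^ 2) (3 * (2 * (x - 1))) x := by
    simpa using (((hasDerivAt_id x).sub_const 1).pow 2).const_mul 3
  exact ((h2.mul h1).sub h3).congr_deriv (by ring)

lemma crb_key_ineq {x : ℝ} (hx : 0 ≤ x) :
    3 * (x - 1) ^ 2 ≤ (2 * x + 4) * (x * log x - x + 1) := by
  rcases eq_or_lt_of_le hx with h | hx
  · rw [← h]; norm_num
  set F : ℝ → ℝ := fun x => (2 * x + 4) * (x * log x - x + 1) - 3 * (x - 1) ^ 2 with hF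
  have hFc : Continuous F := by
    apply Continuous.sub
    · exact (by fun_prop : Continuous fun x : ℝ => 2 * x + 4).mul
        ((Real.continuous_mul_log.sub continuous_id).add continuous_const)
    · fun_prop
  have hF1 : F 1 = 0 := by simp [hF]
  have key : 0 ≤ F x := by
    rcases le_or_gt x 1 with hx1 | hx1
    · -- antitone on Ioc 0 1
      have hanti : AntitoneOn F (Set.Ioc 0 1) := by
        apply antitoneOn_of_deriv_nonpos (convex_Ioc 0 1) hFc.continuousOn
        · intro y hy
          rw [interior_Ioc] at hy
          exact (crb_F_hasDeriv hy.1).differentiableAt.differentiableWithinAt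
        · intro y hy
          rw [interior_Ioc] at hy
          rw [(crb_F_hasDeriv hy.1).deriv]
          have hG : (fun x : ℝ => (x + 1) * log x - 2 * (x - 1)) y ≤
              (fun x : ℝ => (x + 1) * log x - 2 * (x - 1)) 1 :=
            crb_G_mono hy.1 (by norm_num) hy.2.le
          simp only [Real.log_one] at hG
          nlinarith
      have := hanti ⟨hx, hx1⟩ ⟨one_pos, le_refl 1⟩ hx1
      rw [hF1] at this; exact this
    · have hmono : MonotoneOn F (Set.Ici 1) := by
        apply monotoneOn_of_deriv_nonneg (convex_Ici 1) hFc.continuousOn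
        · intro y hy
          rw [interior_Ici] at hy
          exact (crb_F_hasDeriv (lt_trans one_pos hy)).differentiableAt.differentiableWithinAt
        · intro y hy
          rw [interior_Ici] at hy
          rw [(crb_F_hasDeriv (lt_trans one_pos hy)).deriv]
          have hG : (fun x : ℝ => (x + 1) * log x - 2 * (x - 1)) 1 ≤
              (fun x : ℝ => (x + 1) * log x - 2 * (x - 1)) y :=
            crb_G_mono (by norm_num) (Set.mem_Ioi.mpr (lt_trans one_pos hy)) hy.le
          simp only [Real.log_one] at hG
          nlinarith
      have := hmono Set.self_mem_Ici hx1.le hx1.le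
      rw [hF1] at this; exact this
  simpa [hF] using key

lemma crb_pinsker {Z : Type*} [MeasurableSpace Z] (μ ν : Measure Z)
    [IsProbabilityMeasure μ] [IsProbabilityMeasure ν] (hac : μ ≪ ν)
    (hKL : Integrable (fun z => Real.log (μ.rnDeriv ν z).toReal) μ) :
    0 ≤ ∫ z, Real.log (μ.rnDeriv ν z).toReal ∂μ ∧
    ∫ z, |(μ.rnDeriv ν z).toReal - 1| ∂ν ≤
      Real.sqrt (2 * ∫ z, Real.log (μ.rnDeriv ν z).toReal ∂μ) := by
  set f : Z → ℝ := fun z => (μ.rnDeriv ν z).toReal with hf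
  have hfm : Measurable f := (Measure.measurable_rnDeriv μ ν).ennreal_toReal
  have hfnn : ∀ z, 0 ≤ f z := fun z => ENNReal.toReal_nonneg
  have hfint : Integrable f ν := Measure.integrable_toReal_rnDeriv
  have hfint1 : ∫ z, f z ∂ν = 1 := by
    rw [hf, Measure.integral_toReal_rnDeriv hac]; simp
  have hflint : Integrable (fun z => f z * Real.log (f z)) ν := by
    have := (MeasureTheory.integrable_rnDeriv_smul_iff hac).mpr hKL
    simpa [smul_eq_mul] using this
  have hKLchg : ∫ z, f z * Real.log (f z) ∂ν = ∫ z, Real.log (f z) ∂μ := by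
    have := MeasureTheory.integral_rnDeriv_smul hac (f := fun z => Real.log (f z))
    simpa [smul_eq_mul] using this
  set KL := ∫ z, Real.log (f z) ∂μ with hKLdef
  set φ : Z → ℝ := fun z => f z * Real.log (f z) - f z + 1 with hφ
  have hφint : Integrable φ ν := (hflint.sub hfint).add (integrable_const 1)
  have hφnn : ∀ z, 0 ≤ φ z := by
    intro z
    have h := crb_key_ineq (hfnn z)
    show 0 ≤ f z * Real.log (f z) - f z + 1
    nlinarith [sq_nonneg (f z - 1), hfnn z]
  have hsub : Integrable (fun z => f z * Real.log (f z) - f z) ν := hflint.sub hfint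
  have hφeq : ∫ z, φ z ∂ν = KL := by
    rw [hφ]
    rw [integral_add hsub (integrable_const 1),
      integral_sub hflint hfint, integral_const, hfint1, hKLchg]
    simp
  have hKLnn : 0 ≤ KL := hφeq ▸ integral_nonneg hφnn
  -- A := ∫ (f-1)^2/(f+2)
  set u : Z → ℝ := fun z => (f z - 1) ^ 2 / (f z + 2) with hu
  have hu_le : ∀ z, u z ≤ (2 / 3) * φ z := by
    intro z
    have h := crb_key_ineq (hfnn z)
    have h2 : 0 < f z + 2 := by linarith [hfnn z]
    rw [hu, div_le_iff₀ h2]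
    nlinarith
  have hunn : ∀ z, 0 ≤ u z := fun z => by
    have h2 : 0 < f z + 2 := by linarith [hfnn z]
    positivity
  have huint : Integrable u ν := by
    refine Integrable.mono' (hφint.const_mul (2 / 3)) ?_ ?_
    · exact (((hfm.sub measurable_const).pow_const 2).div
        (hfm.add measurable_const)).aestronglyMeasurable
    · exact Filter.Eventually.of_forall fun z => by
        rw [Real.norm_of_nonneg (hunn z)]; exact hu_le z
  have hA_le : ∫ z, u z ∂ν ≤ 2 / 3 * KL := by
    calc ∫ z, u z ∂ν ≤ ∫ z, 2 / 3 * φ z ∂ν :=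
          integral_mono huint (hφint.const_mul _) hu_le
    _ = 2 / 3 * KL := by rw [integral_const_mul, hφeq]
  set B := ∫ z, |f z - 1| ∂ν with hB
  have hBint : Integrable (fun z => |f z - 1|) ν := (hfint.sub (integrable_const 1)).abs
  have hBnn : 0 ≤ B := integral_nonneg fun z => abs_nonneg _
  set t := B / 3 with ht
  have hqnn : ∀ z, 0 ≤ u z - 2 * t * |f z - 1| + t ^ 2 * (f z + 2) := by
    intro z
    have h2 : 0 < f z + 2 := by linarith [hfnn z]
    have key : 0 ≤ (|f z - 1| - t * (f z + 2)) ^ 2 / (f z + 2) := by positivity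
    have habs : |f z - 1| ^ 2 = (f z - 1) ^ 2 := sq_abs _
    have expand : (|f z - 1| - t * (f z + 2)) ^ 2 / (f z + 2)
        = u z - 2 * t * |f z - 1| + t ^ 2 * (f z + 2) := by
      rw [hu]; field_simp; nlinarith [habs]
    linarith [expand ▸ key]
  have hq_int : Integrable
      (fun z => u z - 2 * t * |f z - 1| + t ^ 2 * (f z + 2)) ν :=
    (huint.sub (hBint.const_mul _)).add ((hfint.add (integrable_const 2)).const_mul _)
  have hq : 0 ≤ ∫ z, (u z - 2 * t * |f z - 1| + t ^ 2 * (f z + 2)) ∂ν :=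
    integral_nonneg hqnn
  have h1 : Integrable (fun z => u z - 2 * t * |f z - 1|) ν :=
    huint.sub (hBint.const_mul _)
  have h2 : Integrable (fun z => t ^ 2 * (f z + 2)) ν :=
    ((hfint.add (integrable_const 2)) : Integrable (fun z => f z + 2) ν).const_mul _
  have h3 : Integrable (fun z => 2 * t * |f z - 1|) ν := hBint.const_mul _
  have h4 : Integrable (fun z => f z + 2) ν := hfint.add (integrable_const 2)
  have hsplit : ∫ z, (u z - 2 * t * |f z - 1| + t ^ 2 * (f z + 2)) ∂ν
      = (∫ z, u z ∂ν) - 2 * t * B + t ^ 2 * 3 := by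
    rw [integral_add h1 h2, integral_sub huint h3, integral_const_mul, integral_const_mul,
      integral_add hfint (integrable_const 2), hfint1, integral_const]
    simp
    norm_num
    exact Or.inl hB.symm
  have hB2 : B ^ 2 ≤ 2 * KL := by
    rw [hsplit] at hq
    have : B ^ 2 ≤ 3 * ∫ z, u z ∂ν := by rw [ht] at hq; nlinarith
    nlinarith
  refine ⟨hKLnn, ?_⟩
  calc B = Real.sqrt (B ^ 2) := (Real.sqrt_sq hBnn).symm
  _ ≤ Real.sqrt (2 * KL) := Real.sqrt_le_sqrt hB2

lemma crb_symm {Z : Type*} [MeasurableSpace Z] (μ ν : Measure Z)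
    [IsProbabilityMeasure μ] [IsProbabilityMeasure ν] (hac : μ ≪ ν) (hac' : ν ≪ μ) :
    ∫ z, |(ν.rnDeriv μ z).toReal - 1| ∂μ = ∫ z, |(μ.rnDeriv ν z).toReal - 1| ∂ν := by
  have hchg := MeasureTheory.integral_rnDeriv_smul hac
    (f := fun z => |(ν.rnDeriv μ z).toReal - 1|)
  rw [← hchg]
  refine integral_congr_ae ?_
  have hinv : ∀ᵐ z ∂ν, (μ.rnDeriv ν z)⁻¹ = ν.rnDeriv μ z :=
    hac'.ae_le (Measure.inv_rnDeriv hac)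
  have hpos : ∀ᵐ z ∂ν, 0 < μ.rnDeriv ν z := hac'.ae_le (Measure.rnDeriv_pos hac)
  have hlt : ∀ᵐ z ∂ν, μ.rnDeriv ν z < ⊤ := Measure.rnDeriv_lt_top μ ν
  filter_upwards [hinv, hpos, hlt] with z h1 h2 h3
  have hne0 : μ.rnDeriv ν z ≠ 0 := ne_of_gt h2
  have hnet : μ.rnDeriv ν z ≠ ⊤ := ne_of_lt h3
  have hg : (ν.rnDeriv μ z).toReal = ((μ.rnDeriv ν z).toReal)⁻¹ := by
    rw [← h1, ENNReal.toReal_inv]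
  have hfpos : 0 < (μ.rnDeriv ν z).toReal := ENNReal.toReal_pos hne0 hnet
  rw [smul_eq_mul, hg, ← abs_of_pos hfpos, ← abs_mul, mul_sub,
    abs_of_pos hfpos, mul_inv_cancel₀ (ne_of_gt hfpos), mul_one, abs_sub_comm]


lemma crb_diff {Z : Type*} [MeasurableSpace Z] (μ ν : Measure Z)
    [IsProbabilityMeasure μ] [IsProbabilityMeasure ν] (hac : μ ≪ ν)
    {h : Z → ℝ} {M : ℝ} (hm : Measurable h) (hb : ∀ z, |h z| ≤ M) :
    ∫ z, h z ∂μ - ∫ z, h z ∂ν ≤ M * ∫ z, |(μ.rnDeriv ν z).toReal - 1| ∂ν := by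
  set f : Z → ℝ := fun z => (μ.rnDeriv ν z).toReal with hf
  have hDint : Integrable (fun z => |f z - 1|) ν :=
    (Measure.integrable_toReal_rnDeriv.sub (integrable_const 1)).abs
  have hint₁ : Integrable h ν := by
    refine Integrable.mono' (integrable_const M) hm.aestronglyMeasurable ?_
    exact Filter.Eventually.of_forall fun z => (Real.norm_eq_abs _ ▸ hb z)
  have hint₀ : Integrable h μ := by
    refine Integrable.mono' (integrable_const M) hm.aestronglyMeasurable ?_
    exact Filter.Eventually.of_forall fun z => (Real.norm_eq_abs _ ▸ hb z)
  have hfhint : Integrable (fun z => f z * h z) ν := by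
    have := (MeasureTheory.integrable_rnDeriv_smul_iff hac).mpr hint₀
    simpa [smul_eq_mul] using this
  have hchg : ∫ z, h z ∂μ = ∫ z, f z * h z ∂ν := by
    have := MeasureTheory.integral_rnDeriv_smul hac (f := h)
    simpa [smul_eq_mul] using this.symm
  rw [hchg, ← integral_sub hfhint hint₁]
  calc ∫ z, (f z * h z - h z) ∂ν ≤ ∫ z, |f z - 1| * M ∂ν := by
        refine integral_mono (hfhint.sub hint₁) (hDint.mul_const M) fun z => ?_
        have h1 : f z * h z - h z = (f z - 1) * h z := by ring
        rw [h1]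
        calc (f z - 1) * h z ≤ |(f z - 1) * h z| := le_abs_self _
        _ = |f z - 1| * |h z| := abs_mul _ _
        _ ≤ |f z - 1| * M := mul_le_mul_of_nonneg_left (hb z) (abs_nonneg _)
  _ = M * ∫ z, |f z - 1| ∂ν := by rw [integral_mul_const, mul_comm]

/-- Counterfactual risk bound: with `ε_{F,t} = E_{q_t} L(·,t)`, `ε_{CF,t} = E_{q_{1−t}} L(·,t)`,
`|L| ≤ M`, and weights `p₀ + p₁ = 1`, `p_t ≥ 0`,
`p₀ ε_{CF,1} + p₁ ε_{CF,0} ≤ p₀ ε_{F,1} + p₁ ε_{F,0} + M (√(KL(q₀‖q₁)/2) + √(KL(q₁‖q₀)/2))`,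
where `KL(q‖q') = ∫ log (dq/dq') dq`. -/
theorem counterfactual_risk_bound
    {Z : Type*} [MeasurableSpace Z]
    (q₀ q₁ : Measure Z) [IsProbabilityMeasure q₀] [IsProbabilityMeasure q₁]
    (L : Z → Fin 2 → ℝ) (M p₀ p₁ : ℝ)
    (hLm : ∀ t, Measurable (fun z => L z t))
    (hM : ∀ z t, |L z t| ≤ M)
    (hp₀ : 0 ≤ p₀) (hp₁ : 0 ≤ p₁) (hsum : p₀ + p₁ = 1)
    (hac₀ : q₀ ≪ q₁) (hac₁ : q₁ ≪ q₀)
    (hKL₀ : Integrable (fun z => Real.log (q₀.rnDeriv q₁ z).toReal) q₀)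
    (hKL₁ : Integrable (fun z => Real.log (q₁.rnDeriv q₀ z).toReal) q₁) :
    p₀ * (∫ z, L z 1 ∂q₀) + p₁ * (∫ z, L z 0 ∂q₁) ≤
      p₀ * (∫ z, L z 1 ∂q₁) + p₁ * (∫ z, L z 0 ∂q₀) +
        M * (Real.sqrt ((∫ z, Real.log (q₀.rnDeriv q₁ z).toReal ∂q₀) / 2) +
          Real.sqrt ((∫ z, Real.log (q₁.rnDeriv q₀ z).toReal ∂q₁) / 2)) := by
  have hZ : Nonempty Z := by
    by_contra h
    have h1 : (Set.univ : Set Z) = ∅ := by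
      simp only [Set.eq_empty_iff_forall_notMem]; intro x _; exact h ⟨x⟩
    have := measure_univ (μ := q₀)
    rw [h1, measure_empty] at this
    exact zero_ne_one this
  obtain ⟨z₀⟩ := hZ
  have hMnn : 0 ≤ M := le_trans (abs_nonneg _) (hM z₀ 0)
  set D := ∫ z, |(q₀.rnDeriv q₁ z).toReal - 1| ∂q₁ with hD
  set KL₀ := ∫ z, Real.log (q₀.rnDeriv q₁ z).toReal ∂q₀ with hKLd₀
  set KL₁ := ∫ z, Real.log (q₁.rnDeriv q₀ z).toReal ∂q₁ with hKLd₁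
  obtain ⟨hKL₀nn, hD₀⟩ := crb_pinsker q₀ q₁ hac₀ hKL₀
  obtain ⟨hKL₁nn, hD₁'⟩ := crb_pinsker q₁ q₀ hac₁ hKL₁
  have hsymm := crb_symm q₀ q₁ hac₀ hac₁
  have hD₁ : D ≤ Real.sqrt (2 * KL₁) := by rw [hD, ← hsymm]; exact hD₁'
  have hDnn : 0 ≤ D := integral_nonneg fun z => abs_nonneg _
  have h1 : ∫ z, L z 1 ∂q₀ - ∫ z, L z 1 ∂q₁ ≤ M * D :=
    crb_diff q₀ q₁ hac₀ (hLm 1) (fun z => hM z 1)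
  have h0 : ∫ z, L z 0 ∂q₁ - ∫ z, L z 0 ∂q₀ ≤ M * D := by
    have := crb_diff q₁ q₀ hac₁ (hLm 0) (fun z => hM z 0)
    rwa [hsymm] at this
  -- sqrt arithmetic
  have hs : ∀ K : ℝ, 0 ≤ K → Real.sqrt (2 * K) = 2 * Real.sqrt (K / 2) := by
    intro K hK
    rw [show K / 2 = 2 * K / 4 by ring, Real.sqrt_div (by positivity),
      show (4:ℝ) = 2 ^ 2 by norm_num, Real.sqrt_sq (by norm_num)]
    field_simp
  have hDle : D ≤ Real.sqrt (KL₀ / 2) + Real.sqrt (KL₁ / 2) := by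
    have e0 := hs KL₀ hKL₀nn
    have e1 := hs KL₁ hKL₁nn
    nlinarith [hD₀, hD₁]
  have hfin : M * D ≤ M * (Real.sqrt (KL₀ / 2) + Real.sqrt (KL₁ / 2)) :=
    mul_le_mul_of_nonneg_left hDle hMnn
  have hp0D : p₀ * (∫ z, L z 1 ∂q₀ - ∫ z, L z 1 ∂q₁) ≤ p₀ * (M * D) :=
    mul_le_mul_of_nonneg_left h1 hp₀
  have hp1D : p₁ * (∫ z, L z 0 ∂q₁ - ∫ z, L z 0 ∂q₀) ≤ p₁ * (M * D) :=
    mul_le_mul_of_nonneg_left h0 hp₁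
  have hpsum : p₀ * (M * D) + p₁ * (M * D) = M * D := by
    rw [← add_mul, hsum, one_mul]
  have hd1 : p₀ * (∫ z, L z 1 ∂q₀ - ∫ z, L z 1 ∂q₁)
      = p₀ * ∫ z, L z 1 ∂q₀ - p₀ * ∫ z, L z 1 ∂q₁ := by ring
  have hd0 : p₁ * (∫ z, L z 0 ∂q₁ - ∫ z, L z 0 ∂q₀)
      = p₁ * ∫ z, L z 0 ∂q₁ - p₁ * ∫ z, L z 0 ∂q₀ := by ring
  linarith [hp0D, hp1D, hfin]
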